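/- If X₁ ~ Bernoulli(p) with p ≠ 1/2 and X₂ ~ N(0, σ²) are independent with σ² ≥ p(1−p)/(π(1−2p)²), then X = X₁ + X₂ is reasonable with respect to cos. -/

import Mathlib

open MeasureTheory ProbabilityTheory Set

section Aux
open Complex
open scoped NNReal ENNReal Real

lemma gauss_char' (v : ℝ≥0) (hv : v ≠ 0) (t : ℝ) :
    ∫ x : ℝ, Complex.exp (t * x * Complex.I) ∂(gaussianReal 0 v) =
      Complex.exp (-((v : ℝ) * t ^ 2) / 2) := by
  have hvpos : (0:ℝ) < v := NNReal.coe_pos.mpr (pos_iff_ne_zero.mpr hv)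
  have hs : (0:ℝ) < Real.sqrt (2 * Real.pi * v) := by
    apply Real.sqrt_pos.mpr; positivity
  set b : ℂ := ((-(1/(2*(v:ℝ))) : ℝ) : ℂ) with hbdef
  have hb : b.re < 0 := by
    rw [hbdef, Complex.ofReal_re]
    have : (0:ℝ) < 1/(2*(v:ℝ)) := by positivity
    linarith
  rw [gaussianReal_of_var_ne_zero _ hv]
  rw [show Measure.withDensity ℙ (gaussianPDF 0 v) = Measure.withDensity ℙ
      (fun x => ((Real.toNNReal (gaussianPDFReal 0 v x) : ℝ≥0) : ℝ≥0∞)) from rfl,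
    integral_withDensity_eq_integral_smul
    ((measurable_gaussianPDFReal 0 v).real_toNNReal)]
  have h1 : ∀ x : ℝ, (Real.toNNReal (gaussianPDFReal 0 v x) : ℝ≥0) •
      Complex.exp (t * x * Complex.I)
      = ((Real.sqrt (2 * Real.pi * v) : ℝ)⁻¹ : ℂ) *
        Complex.exp (b * x ^ 2 + (t * Complex.I) * x + 0) := by
    intro x
    have hnn : 0 ≤ gaussianPDFReal 0 v x := gaussianPDFReal_nonneg 0 v x
    rw [NNReal.smul_def, Real.coe_toNNReal _ hnn, gaussianPDFReal, real_smul,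
      Complex.ofReal_mul, Complex.ofReal_exp, Complex.ofReal_inv,
      mul_assoc, ← Complex.exp_add, add_zero]
    congr 1
    rw [hbdef]
    push_cast
    have hv0 : ((v:ℝ):ℂ) ≠ 0 := by
      simp only [ne_eq, Complex.ofReal_eq_zero]; exact ne_of_gt hvpos
    field_simp
    ring
  simp_rw [h1]
  rw [integral_const_mul, integral_cexp_quadratic hb]
  have hπb : ((Real.pi : ℂ) / -b) ^ (1/2 : ℂ) = (Real.sqrt (2 * Real.pi * v) : ℂ) := by
    have h2 : ((Real.pi : ℂ) / -b) = ((2 * Real.pi * v : ℝ) : ℂ) := by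
      rw [hbdef]
      have hv0 : ((v:ℝ):ℂ) ≠ 0 := by
        simp only [ne_eq, Complex.ofReal_eq_zero]; exact ne_of_gt hvpos
      push_cast
      field_simp
    rw [h2, show (1/2 : ℂ) = ((1/2 : ℝ) : ℂ) by norm_num,
      ← Complex.ofReal_cpow (by positivity)]
    norm_cast
    rw [← Real.sqrt_eq_rpow]
  have hne : ((Real.sqrt (2 * Real.pi * v) : ℝ) : ℂ) ≠ 0 :=
    Complex.ofReal_ne_zero.mpr (ne_of_gt hs)
  rw [hπb, ← mul_assoc, inv_mul_cancel₀ hne, one_mul]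
  congr 1
  rw [hbdef]
  have hv0 : ((v:ℝ):ℂ) ≠ 0 := by
    simp only [ne_eq, Complex.ofReal_eq_zero]; exact ne_of_gt hvpos
  rw [mul_pow, Complex.I_sq]
  push_cast
  field_simp
  ring

lemma ber_char' (p : ℝ) (hp0 : 0 ≤ p) (hp1 : p ≤ 1) (t : ℝ) :
    ∫ x : ℝ, Complex.exp (t * x * Complex.I)
      ∂(ENNReal.ofReal p • Measure.dirac (1 : ℝ) +
        ENNReal.ofReal (1 - p) • Measure.dirac (0 : ℝ)) =
      (1 - p : ℂ) + p * Complex.exp (t * Complex.I) := by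
  have hm : StronglyMeasurable fun x : ℝ => Complex.exp (t * x * Complex.I) :=
    (Continuous.stronglyMeasurable (by continuity))
  have hnorm : ∀ x : ℝ, ‖Complex.exp (t * x * Complex.I)‖ = 1 := by
    intro x
    rw [Complex.norm_exp]
    simp
  have hint : ∀ (c : ℝ) (a : ℝ), Integrable (fun x : ℝ => Complex.exp (t * x * Complex.I))
      (ENNReal.ofReal c • Measure.dirac (a : ℝ)) := by
    intro c a
    haveI : IsFiniteMeasure (ENNReal.ofReal c • Measure.dirac (a : ℝ)) := by
      constructor
      simp only [Measure.smul_apply, smul_eq_mul, Measure.dirac_apply' _ MeasurableSet.univ]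
      simp [ENNReal.ofReal_lt_top, ENNReal.mul_lt_top, ENNReal.ofReal_ne_top]
    refine (integrable_const (1:ℝ)).mono' hm.aestronglyMeasurable ?_
    filter_upwards with x
    rw [hnorm x]
  rw [integral_add_measure (hint p 1) (hint (1-p) 0), integral_smul_measure,
    integral_smul_measure, integral_dirac, integral_dirac]
  rw [ENNReal.toReal_ofReal hp0, ENNReal.toReal_ofReal (by linarith)]
  push_cast
  simp [real_smul]
  ring

lemma key_ineq' (p v : ℝ) (hp0 : 0 ≤ p) (hp1 : p ≤ 1) (hphalf : p ≠ 1/2) (hv : 0 < v)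
    (hσ2 : p * (1-p) / (Real.pi * (1-2*p)^2) ≤ v) (x : ℝ) (hx : 0 < x) :
    0 ≤ 2*p*(1-p)*Real.sin x + (((1-p)^2+p^2) + 2*p*(1-p)*Real.cos x) * (2*v*x) := by
  have hB : 0 ≤ 2*p*(1-p) := by nlinarith
  have hA : (1-2*p)^2 ≤ ((1-p)^2+p^2) + 2*p*(1-p)*Real.cos x := by
    nlinarith [Real.neg_one_le_cos x]
  have hA0 : 0 ≤ ((1-p)^2+p^2) + 2*p*(1-p)*Real.cos x :=
    le_trans (sq_nonneg _) hA
  by_cases hsin : 0 ≤ Real.sin x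
  · have : 0 ≤ (((1-p)^2+p^2) + 2*p*(1-p)*Real.cos x) * (2*v*x) := by positivity
    nlinarith
  · push_neg at hsin
    have hπ : Real.pi < x := by
      by_contra h
      push_neg at h
      exact absurd (Real.sin_nonneg_of_nonneg_of_le_pi hx.le h) (not_le.mpr hsin)
    have h2p : 0 < (1-2*p)^2 := by
      have h0 : 1-2*p ≠ 0 := by intro h; apply hphalf; linarith
      positivity
    have hmul : p*(1-p) ≤ v * (Real.pi * (1-2*p)^2) := by
      rw [div_le_iff₀ (by positivity)] at hσ2
      linarith
    have e1 : (1-2*p)^2 * (2*v*Real.pi) ≤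
        (((1-p)^2+p^2)+2*p*(1-p)*Real.cos x) * (2*v*x) := by
      apply mul_le_mul hA (by nlinarith [Real.pi_pos]) (by positivity) hA0
    have e2 : 2*(p*(1-p)) ≤ (1-2*p)^2 * (2*v*Real.pi) := by nlinarith
    have e3 : -(2*p*(1-p)) ≤ 2*p*(1-p)*Real.sin x := by
      nlinarith [Real.neg_one_le_sin x]
    linarith

lemma g_anti' (p v : ℝ) (hp0 : 0 ≤ p) (hp1 : p ≤ 1) (hphalf : p ≠ 1/2) (hv : 0 < v)
    (hσ2 : p * (1-p) / (Real.pi * (1-2*p)^2) ≤ v) :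
    AntitoneOn (fun d => (((1-p)^2 + p^2) + 2*p*(1-p)*Real.cos d) * Real.exp (-(v*d^2)))
      (Ici 0) := by
  have hder : ∀ x : ℝ, HasDerivAt
      (fun d => (((1-p)^2 + p^2) + 2*p*(1-p)*Real.cos d) * Real.exp (-(v*d^2)))
      ((2*p*(1-p) * (-Real.sin x)) * Real.exp (-(v*x^2)) +
        (((1-p)^2 + p^2) + 2*p*(1-p)*Real.cos x) * (Real.exp (-(v*x^2)) * (-(v*(2*x))))) x := by
    intro x
    have h1 : HasDerivAt (fun d : ℝ => ((1-p)^2+p^2) + 2*p*(1-p)*Real.cos d)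
        (2*p*(1-p) * (-Real.sin x)) x :=
      ((Real.hasDerivAt_cos x).const_mul (2*p*(1-p))).const_add _
    have h2 : HasDerivAt (fun d : ℝ => -(v*d^2)) (-(v*(2*x))) x := by
      have := ((hasDerivAt_pow 2 x).const_mul v).neg
      exact this.congr_deriv (by norm_num)
    exact h1.mul h2.exp
  apply antitoneOn_of_deriv_nonpos (convex_Ici 0)
  · exact Continuous.continuousOn (by fun_prop)
  · intro x hx
    exact (hder x).differentiableAt.differentiableWithinAt
  · intro x hx
    rw [interior_Ici] at hx
    rw [(hder x).deriv]
    have hkey := key_ineq' p v hp0 hp1 hphalf hv hσ2 x hx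
    nlinarith [Real.exp_pos (-(v*x^2))]

end Aux


/-- If `X₁ ~ Bernoulli(p)` with `p ≠ 1/2` and `X₂ ~ N(0,σ²)` are independent
with `σ² ≥ p(1−p)/(π(1−2p)²)`, then `X = X₁ + X₂` is reasonable with respect to `cos`. -/
theorem stmt13 {Ω : Type*} [MeasurableSpace Ω] (P : Measure Ω) [IsProbabilityMeasure P]
    (X₁ X₂ : Ω → ℝ) (hX₁ : Measurable X₁) (hX₂ : Measurable X₂)
    (hindep : IndepFun X₁ X₂ P)
    (p : ℝ) (hp0 : 0 ≤ p) (hp1 : p ≤ 1) (hphalf : p ≠ 1 / 2)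
    (hBer : P.map X₁ = ENNReal.ofReal p • Measure.dirac (1 : ℝ) +
      ENNReal.ofReal (1 - p) • Measure.dirac (0 : ℝ))
    (σ : NNReal) (hσ : 0 < σ)
    (hσ2 : p * (1 - p) / (Real.pi * (1 - 2 * p) ^ 2) ≤ (σ : ℝ) ^ 2)
    (hGauss : P.map X₂ = gaussianReal 0 (σ ^ 2))
    (X : Ω → ℝ) (hXdef : X = X₁ + X₂) :
    AntitoneOn (fun d : ℝ => ⨆ a : ℝ, ∫ ω, Real.cos (a + d * X ω) ∂P) (Ioi 0) := by
  subst hXdef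
  simp only [Pi.add_apply]
  set v : ℝ := (σ : ℝ) ^ 2 with hvdef
  have hv : 0 < v := by positivity
  have hXm : Measurable fun ω => X₁ ω + X₂ ω := hX₁.add hX₂
  -- characteristic function of X
  have hΦ : ∀ d : ℝ, (∫ ω, Complex.exp (((d * (X₁ ω + X₂ ω) : ℝ) : ℂ) * Complex.I) ∂P)
      = ((1 - p : ℂ) + p * Complex.exp (d * Complex.I)) *
        Complex.exp (-(v * d ^ 2) / 2) := by
    intro d
    have hmap : P.map (fun ω => (X₁ ω, X₂ ω)) = (P.map X₁).prod (P.map X₂) :=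
      (indepFun_iff_map_prod_eq_prod_map_map hX₁.aemeasurable hX₂.aemeasurable).mp hindep
    have hcont : AEStronglyMeasurable
        (fun z : ℝ × ℝ => Complex.exp (d * z.1 * Complex.I) * Complex.exp (d * z.2 * Complex.I))
        (P.map (fun ω => (X₁ ω, X₂ ω))) :=
      (Continuous.aestronglyMeasurable (by continuity))
    calc ∫ ω, Complex.exp (((d * (X₁ ω + X₂ ω) : ℝ) : ℂ) * Complex.I) ∂P
        = ∫ ω, Complex.exp (d * X₁ ω * Complex.I) * Complex.exp (d * X₂ ω * Complex.I) ∂P := by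
          congr 1
          funext ω
          rw [← Complex.exp_add]
          congr 1
          push_cast
          ring
      _ = ∫ z : ℝ × ℝ, Complex.exp (d * z.1 * Complex.I) * Complex.exp (d * z.2 * Complex.I)
            ∂(P.map (fun ω => (X₁ ω, X₂ ω))) := by
          rw [integral_map (hX₁.prodMk hX₂).aemeasurable hcont]
      _ = (∫ x : ℝ, Complex.exp (d * x * Complex.I) ∂(P.map X₁)) *
            ∫ y : ℝ, Complex.exp (d * y * Complex.I) ∂(P.map X₂) := by
          rw [hmap]
          haveI : IsProbabilityMeasure (P.map X₁) := Measure.isProbabilityMeasure_map hX₁.aemeasurable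
          haveI : IsProbabilityMeasure (P.map X₂) := Measure.isProbabilityMeasure_map hX₂.aemeasurable
          exact integral_prod_mul (μ := P.map X₁) (ν := P.map X₂) (L := ℂ)
            (fun x => Complex.exp (d * x * Complex.I))
            (fun y => Complex.exp (d * y * Complex.I))
      _ = ((1 - p : ℂ) + p * Complex.exp (d * Complex.I)) *
            Complex.exp (-(v * d ^ 2) / 2) := by
          rw [hBer, hGauss, ber_char' p hp0 hp1 d,
            gauss_char' _ (pow_ne_zero 2 (ne_of_gt hσ)) d]
          norm_num [hvdef]
  -- pointwise value of the sup
  have habs : ∀ d : ℝ, (⨆ a : ℝ, ∫ ω, Real.cos (a + d * (X₁ ω + X₂ ω)) ∂P)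
      = Real.sqrt ((((1-p)^2 + p^2) + 2*p*(1-p)*Real.cos d) * Real.exp (-(v*d^2))) := by
    intro d
    set z : ℂ := ((1 - p : ℂ) + p * Complex.exp (d * Complex.I)) *
        Complex.exp (-(v * d ^ 2) / 2) with hzdef
    have hint : ∀ a : ℝ, Integrable
        (fun ω => Complex.exp (((a + d * (X₁ ω + X₂ ω) : ℝ) : ℂ) * Complex.I)) P := by
      intro a
      have hm : Measurable fun ω => Complex.exp (((a + d * (X₁ ω + X₂ ω) : ℝ) : ℂ) * Complex.I) :=
        Complex.measurable_exp.comp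
          ((Complex.measurable_ofReal.comp ((hXm.const_mul d).const_add a)).mul_const Complex.I)
      refine (integrable_const (1:ℝ)).mono' hm.aestronglyMeasurable ?_
      filter_upwards with ω
      rw [Complex.norm_exp_ofReal_mul_I]
    have h1 : ∀ a : ℝ, ∫ ω, Real.cos (a + d * (X₁ ω + X₂ ω)) ∂P
        = (Complex.exp ((a : ℂ) * Complex.I) * z).re := by
      intro a
      have e1 : ∫ ω, Real.cos (a + d * (X₁ ω + X₂ ω)) ∂P
          = ∫ ω, (Complex.exp (((a + d * (X₁ ω + X₂ ω) : ℝ) : ℂ) * Complex.I)).re ∂P := by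
        congr 1
        funext ω
        rw [Complex.exp_ofReal_mul_I_re]
      have e2 : ∫ ω, (Complex.exp (((a + d * (X₁ ω + X₂ ω) : ℝ) : ℂ) * Complex.I)).re ∂P
          = (∫ ω, Complex.exp (((a + d * (X₁ ω + X₂ ω) : ℝ) : ℂ) * Complex.I) ∂P).re := by
        simpa using integral_re (hint a)
      rw [e1, e2]
      congr 1
      rw [hzdef, ← hΦ d, ← integral_const_mul]
      congr 1
      funext ω
      rw [← Complex.exp_add]
      congr 1
      push_cast
      ring
    have hub : ∀ a : ℝ, (Complex.exp ((a : ℂ) * Complex.I) * z).re ≤ ‖z‖ := by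
      intro a
      refine le_trans (Complex.re_le_norm _) ?_
      rw [norm_mul, Complex.norm_exp_ofReal_mul_I, one_mul]
    have hatt : (Complex.exp (((-z.arg : ℝ) : ℂ) * Complex.I) * z).re = ‖z‖ := by
      have h0 : Complex.exp (((-z.arg : ℝ) : ℂ) * Complex.I) * z = (‖z‖ : ℂ) := by
        rw [Complex.ofReal_neg, neg_mul, Complex.exp_neg,
          inv_mul_eq_iff_eq_mul₀ (Complex.exp_ne_zero _), mul_comm,
          Complex.norm_mul_exp_arg_mul_I]
      rw [h0, Complex.ofReal_re]
    have hsup : (⨆ a : ℝ, ∫ ω, Real.cos (a + d * (X₁ ω + X₂ ω)) ∂P) = ‖z‖ := by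
      apply le_antisymm
      · exact ciSup_le fun a => le_trans (le_of_eq (h1 a)) (hub a)
      · have hbdd : BddAbove (range fun a : ℝ => ∫ ω, Real.cos (a + d * (X₁ ω + X₂ ω)) ∂P) := by
          refine ⟨‖z‖, ?_⟩
          rintro _ ⟨a, rfl⟩
          exact le_trans (le_of_eq (h1 a)) (hub a)
        exact le_trans (le_of_eq (hatt.symm.trans (h1 (-z.arg)).symm))
          (le_ciSup hbdd (-z.arg))
    rw [hsup, hzdef]
    -- compute the absolute value
    have hz1 : (1 - p : ℂ) + p * Complex.exp ((d : ℂ) * Complex.I)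
        = ((1 - p + p * Real.cos d : ℝ) : ℂ) + ((p * Real.sin d : ℝ) : ℂ) * Complex.I := by
      rw [Complex.exp_mul_I, ← Complex.ofReal_cos, ← Complex.ofReal_sin]
      push_cast
      ring
    rw [norm_mul, hz1, Complex.norm_def, Complex.normSq_add_mul_I, Complex.norm_exp]
    have hre : (-((v:ℂ) * (d:ℂ) ^ 2) / 2) = ((-(v * d^2)/2 : ℝ) : ℂ) := by
      push_cast
      ring
    rw [hre, Complex.ofReal_re]
    have hM : (1 - p + p * Real.cos d)^2 + (p * Real.sin d)^2
        = ((1-p)^2 + p^2) + 2*p*(1-p)*Real.cos d := by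
      nlinarith [Real.sin_sq_add_cos_sq d]
    rw [hM]
    have hexp : Real.exp (-(v*d^2)) = (Real.exp (-(v*d^2)/2))^2 := by
      have h := Real.exp_add (-(v*d^2)/2) (-(v*d^2)/2)
      rw [add_halves] at h
      rw [h]
      exact (pow_two _).symm
    have hA0 : 0 ≤ ((1-p)^2 + p^2) + 2*p*(1-p)*Real.cos d := by
      rw [← hM]
      positivity
    rw [hexp, Real.sqrt_mul hA0, Real.sqrt_sq (le_of_lt (Real.exp_pos _))]
  -- conclude
  intro x hx y hy hxy
  simp only
  rw [habs x, habs y]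
  exact Real.sqrt_le_sqrt
    (g_anti' p v hp0 hp1 (by simpa using hphalf) hv (by simpa [hvdef] using hσ2)
      (le_of_lt (mem_Ioi.mp hx)) (le_of_lt (mem_Ioi.mp hy)) hxy)
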